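/- Let w ∈ A₂ on ℝ. Then for every dyadic interval J: Σ_{K⊆J} |⟨w^{1/2}, h_{K₋}⟩ ⟨w^{-1/2}, h_K⟩| ≤ [w]_{A₂}^{1/2} |J|, where K₋ is the left half of K. -/

import Mathlib

open MeasureTheory Set
open scoped ENNReal

noncomputable section

/-- The dyadic interval `[k·2^n, (k+1)·2^n)` encoded by the pair `p = (n, k)`. -/
def dyad (p : ℤ × ℤ) : Set ℝ := Set.Ico ((p.2 : ℝ) * 2 ^ p.1) (((p.2 : ℝ) + 1) * 2 ^ p.1)

/-- Left half of a dyadic interval. -/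
def dLeft (p : ℤ × ℤ) : ℤ × ℤ := (p.1 - 1, 2 * p.2)

/-- Right half of a dyadic interval. -/
def dRight (p : ℤ × ℤ) : ℤ × ℤ := (p.1 - 1, 2 * p.2 + 1)

/-- Dyadic parent. -/
def dParent (p : ℤ × ℤ) : ℤ × ℤ := (p.1 + 1, Int.fdiv p.2 2)

/-- Length of the dyadic interval. -/
def dLen (p : ℤ × ℤ) : ℝ := 2 ^ p.1

/-- The L²-normalized Haar function `h_I = |I|^{-1/2}(1_{I₋} - 1_{I₊})`. -/
def haarF (p : ℤ × ℤ) : ℝ → ℝ := fun x =>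
  (Real.sqrt (dLen p))⁻¹ *
    ((dyad (dLeft p)).indicator (fun _ => (1 : ℝ)) x -
      (dyad (dRight p)).indicator (fun _ => (1 : ℝ)) x)

/-- The averaging function `h_I^1 = |I|^{-1} 1_I`. -/
def haarAvg (p : ℤ × ℤ) : ℝ → ℝ := fun x =>
  (dLen p)⁻¹ * (dyad p).indicator (fun _ => (1 : ℝ)) x

/-- Haar coefficient `⟨f, h_I⟩`. -/
def hc (f : ℝ → ℝ) (p : ℤ × ℤ) : ℝ := ∫ x, f x * haarF p x

/-- Average `⟨f⟩_I = |I|⁻¹ ∫_I f`. -/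
def avg (f : ℝ → ℝ) (p : ℤ × ℤ) : ℝ := (dLen p)⁻¹ * ∫ x in dyad p, f x

open Classical in
/-- `δ(J, I) = 1` if `J ⊆ I₋` and `-1` otherwise (in particular if `J ⊆ I₊`). -/
def dsgn (q p : ℤ × ℤ) : ℝ := if dyad q ⊆ dyad (dLeft p) then 1 else -1

/-- `𝔰(J) = √2 · Σ_{K : K₋ ⊋ J} |K|⁻¹`. -/
def sfrak (p : ℤ × ℤ) : ℝ :=
  Real.sqrt 2 * ∑' q : {q : ℤ × ℤ // dyad p ⊂ dyad (dLeft q)}, (dLen q.1)⁻¹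

section Geometry

lemma two_zpow_pos (n : ℤ) : (0:ℝ) < 2 ^ n := zpow_pos two_pos n

lemma dLen_pos (p : ℤ × ℤ) : 0 < dLen p := two_zpow_pos p.1

lemma measurableSet_dyad (p : ℤ × ℤ) : MeasurableSet (dyad p) := measurableSet_Ico

lemma volume_dyad (p : ℤ × ℤ) : volume (dyad p) = ENNReal.ofReal (dLen p) := by
  rw [dyad, Real.volume_Ico]
  congr 1
  unfold dLen
  ring

lemma dyad_nonempty (p : ℤ × ℤ) : (dyad p).Nonempty := by
  refine ⟨(p.2:ℝ) * 2 ^ p.1, le_refl _, ?_⟩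
  have := two_zpow_pos p.1
  nlinarith

lemma dyad_subset_of_level_le {p q : ℤ × ℤ} (hmn : p.1 ≤ q.1)
    (h : (dyad p ∩ dyad q).Nonempty) : dyad p ⊆ dyad q := by
  obtain ⟨x, hx1, hx2⟩ := h
  obtain ⟨m, j⟩ := p
  obtain ⟨n, k⟩ := q
  simp only at hmn
  simp only [dyad, Set.mem_Ico] at hx1 hx2 ⊢
  set d : ℕ := (n - m).toNat with hd
  have h2m : (0:ℝ) < 2 ^ m := two_zpow_pos m
  have h2 : (2:ℝ) ^ n = 2 ^ d * 2 ^ m := by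
    rw [← zpow_natCast, ← zpow_add₀ (two_ne_zero)]
    congr 1
    omega
  have key1 : (k:ℝ) * 2 ^ n ≤ j * 2 ^ m := by
    have hx : (k:ℝ) * 2 ^ d * 2 ^ m < ((j:ℝ) + 1) * 2 ^ m := by
      rw [mul_assoc, ← h2]; exact lt_of_le_of_lt hx2.1 hx1.2
    have h1 : (k:ℝ) * 2 ^ d < (j:ℝ) + 1 := lt_of_mul_lt_mul_right hx h2m.le
    have hb : (k:ℤ) * 2 ^ d < j + 1 := by exact_mod_cast h1
    have hc : (k:ℤ) * 2 ^ d ≤ j := by omega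
    have he : (k:ℝ) * 2 ^ d ≤ j := by exact_mod_cast hc
    rw [h2, ← mul_assoc]
    exact mul_le_mul_of_nonneg_right he h2m.le
  have key2 : ((j:ℝ) + 1) * 2 ^ m ≤ ((k:ℝ) + 1) * 2 ^ n := by
    have hx : (j:ℝ) * 2 ^ m < ((k:ℝ) + 1) * 2 ^ d * 2 ^ m := by
      rw [mul_assoc, ← h2]; exact lt_of_le_of_lt hx1.1 hx2.2
    have h1 : (j:ℝ) < ((k:ℝ) + 1) * 2 ^ d := lt_of_mul_lt_mul_right hx h2m.le
    have hb : (j:ℤ) < (k + 1) * 2 ^ d := by exact_mod_cast h1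
    have hc : (j:ℤ) + 1 ≤ (k + 1) * 2 ^ d := by omega
    have he : (j:ℝ) + 1 ≤ ((k:ℝ) + 1) * 2 ^ d := by exact_mod_cast hc
    rw [h2, ← mul_assoc]
    exact mul_le_mul_of_nonneg_right he h2m.le
  intro y hy
  simp only [dyad, Set.mem_Ico] at hy
  exact ⟨le_trans key1 hy.1, lt_of_lt_of_le hy.2 key2⟩

lemma two_zpow_succ (n : ℤ) : (2:ℝ) ^ n = 2 ^ (n - 1) * 2 := by
  rw [← zpow_add_one₀ (two_ne_zero)]
  congr 1
  omega

lemma dyad_dLeft (p : ℤ × ℤ) :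
    dyad (dLeft p) = Set.Ico ((p.2:ℝ) * 2 ^ p.1) ((p.2:ℝ) * 2 ^ p.1 + 2 ^ (p.1 - 1)) := by
  have e1 : (((2 * p.2 : ℤ)):ℝ) * 2 ^ (p.1 - 1) = (p.2:ℝ) * 2 ^ p.1 := by
    push_cast
    linear_combination (-(p.2:ℝ)) * two_zpow_succ p.1
  simp only [dyad, dLeft]
  rw [add_mul, one_mul, e1]

lemma dyad_dRight (p : ℤ × ℤ) :
    dyad (dRight p) = Set.Ico ((p.2:ℝ) * 2 ^ p.1 + 2 ^ (p.1 - 1)) (((p.2:ℝ) + 1) * 2 ^ p.1) := by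
  have e1 : (((2 * p.2 + 1 : ℤ)):ℝ) * 2 ^ (p.1 - 1) = (p.2:ℝ) * 2 ^ p.1 + 2 ^ (p.1 - 1) := by
    push_cast
    linear_combination (-(p.2:ℝ)) * two_zpow_succ p.1
  have e2 : (((2 * p.2 + 1 : ℤ) : ℝ) + 1) * 2 ^ (p.1 - 1) = ((p.2:ℝ) + 1) * 2 ^ p.1 := by
    push_cast
    linear_combination (-(p.2:ℝ) - 1) * two_zpow_succ p.1
  simp only [dyad, dRight]
  rw [e2, e1]

lemma halves_union (p : ℤ × ℤ) : dyad (dLeft p) ∪ dyad (dRight p) = dyad p := by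
  rw [dyad_dLeft, dyad_dRight]
  rw [Set.Ico_union_Ico_eq_Ico]
  · rfl
  · nlinarith [two_zpow_pos (p.1 - 1)]
  · have h := two_zpow_succ p.1
    nlinarith [two_zpow_pos (p.1 - 1)]

lemma halves_disjoint (p : ℤ × ℤ) : Disjoint (dyad (dLeft p)) (dyad (dRight p)) := by
  rw [dyad_dLeft, dyad_dRight]
  exact Set.Ico_disjoint_Ico_same

lemma dLeft_subset (p : ℤ × ℤ) : dyad (dLeft p) ⊆ dyad p := by
  rw [← halves_union p]; exact Set.subset_union_left

lemma dRight_subset (p : ℤ × ℤ) : dyad (dRight p) ⊆ dyad p := by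
  rw [← halves_union p]; exact Set.subset_union_right

lemma level_le_of_subset {p q : ℤ × ℤ} (h : dyad p ⊆ dyad q) : p.1 ≤ q.1 := by
  have hm := measure_mono (μ := volume) h
  rw [volume_dyad, volume_dyad] at hm
  have h2 : dLen p ≤ dLen q := (ENNReal.ofReal_le_ofReal_iff (dLen_pos q).le).mp hm
  unfold dLen at h2
  exact (zpow_le_zpow_iff_right₀ (a := (2:ℝ)) one_lt_two).mp h2

lemma eq_of_dyad_eq {p q : ℤ × ℤ} (h : dyad p = dyad q) : p = q := by
  have h1 : p.1 = q.1 := le_antisymm (level_le_of_subset h.le) (level_le_of_subset h.ge)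
  have hp : (p.2:ℝ) * 2 ^ p.1 ∈ dyad p := by
    simp only [dyad, Set.mem_Ico]
    refine ⟨le_refl _, ?_⟩
    have := two_zpow_pos p.1; nlinarith
  have hq : (q.2:ℝ) * 2 ^ q.1 ∈ dyad q := by
    simp only [dyad, Set.mem_Ico]
    refine ⟨le_refl _, ?_⟩
    have := two_zpow_pos q.1; nlinarith
  have hp2 : (p.2:ℝ) * 2 ^ p.1 ∈ dyad q := h ▸ hp
  have hq2 : (q.2:ℝ) * 2 ^ q.1 ∈ dyad p := h.symm ▸ hq
  simp only [dyad, Set.mem_Ico] at hp2 hq2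
  have h4 : (p.2:ℝ) = q.2 := by
    have h2 := hp2.1
    have h3 := hq2.1
    rw [h1] at h2 h3
    have heq : (p.2:ℝ) * 2 ^ q.1 = (q.2:ℝ) * 2 ^ q.1 := le_antisymm h3 h2
    exact mul_right_cancel₀ (two_zpow_pos q.1).ne' heq
  exact Prod.ext h1 (by exact_mod_cast h4)

end Geometry
section Haar
open scoped InnerProductSpace

lemma haar_eq_zero_of_not_mem {p : ℤ × ℤ} {x : ℝ} (h : x ∉ dyad p) : haarF p x = 0 := by
  have hL : x ∉ dyad (dLeft p) := fun hx => h (dLeft_subset p hx)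
  have hR : x ∉ dyad (dRight p) := fun hx => h (dRight_subset p hx)
  simp [haarF, Set.indicator_of_notMem hL, Set.indicator_of_notMem hR]

lemma haar_on_left {p : ℤ × ℤ} {x : ℝ} (h : x ∈ dyad (dLeft p)) :
    haarF p x = (Real.sqrt (dLen p))⁻¹ := by
  have hR : x ∉ dyad (dRight p) := Set.disjoint_left.mp (halves_disjoint p) h
  simp [haarF, Set.indicator_of_mem h, Set.indicator_of_notMem hR]

lemma haar_on_right {p : ℤ × ℤ} {x : ℝ} (h : x ∈ dyad (dRight p)) :
    haarF p x = -(Real.sqrt (dLen p))⁻¹ := by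
  have hL : x ∉ dyad (dLeft p) := Set.disjoint_right.mp (halves_disjoint p) h
  simp [haarF, Set.indicator_of_mem h, Set.indicator_of_notMem hL]

lemma integrable_indicator_dyad (p : ℤ × ℤ) :
    Integrable ((dyad p).indicator fun _ => (1:ℝ)) volume := by
  rw [integrable_indicator_iff (measurableSet_dyad p)]
  refine integrableOn_const ?_
  rw [volume_dyad]; exact ENNReal.ofReal_ne_top

lemma integrable_haar (p : ℤ × ℤ) : Integrable (haarF p) volume := by
  unfold haarF
  exact ((integrable_indicator_dyad (dLeft p)).sub (integrable_indicator_dyad (dRight p))).const_mul _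

lemma integral_indicator_dyad (p : ℤ × ℤ) :
    ∫ x, (dyad p).indicator (fun _ => (1:ℝ)) x = dLen p := by
  rw [integral_indicator_const _ (measurableSet_dyad p), measureReal_def, volume_dyad]
  simp [ENNReal.toReal_ofReal (dLen_pos p).le]

lemma integral_haar (p : ℤ × ℤ) : ∫ x, haarF p x = 0 := by
  unfold haarF
  rw [integral_const_mul _ _,
    integral_sub (integrable_indicator_dyad _) (integrable_indicator_dyad _),
    integral_indicator_dyad, integral_indicator_dyad]
  have h : dLen (dLeft p) = dLen (dRight p) := rfl
  rw [h, sub_self, mul_zero]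

lemma haar_sq (p : ℤ × ℤ) (x : ℝ) :
    haarF p x * haarF p x = (dLen p)⁻¹ * (dyad p).indicator (fun _ => (1:ℝ)) x := by
  have hsq : (Real.sqrt (dLen p))⁻¹ * (Real.sqrt (dLen p))⁻¹ = (dLen p)⁻¹ := by
    rw [← mul_inv, Real.mul_self_sqrt (dLen_pos p).le]
  by_cases hx : x ∈ dyad p
  · rw [Set.indicator_of_mem hx, mul_one]
    have hx2 := hx
    rw [← halves_union p] at hx2
    rcases hx2 with hL | hR
    · rw [haar_on_left hL, hsq]
    · rw [haar_on_right hR, neg_mul_neg, hsq]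
  · rw [haar_eq_zero_of_not_mem hx, Set.indicator_of_notMem hx, mul_zero, mul_zero]

lemma memLp_haar (p : ℤ × ℤ) : MemLp (haarF p) 2 volume := by
  have h1 : volume (dyad (dLeft p)) ≠ ⊤ := by rw [volume_dyad]; exact ENNReal.ofReal_ne_top
  have h2 : volume (dyad (dRight p)) ≠ ⊤ := by rw [volume_dyad]; exact ENNReal.ofReal_ne_top
  unfold haarF
  exact (((memLp_indicator_const 2 (measurableSet_dyad _) (1:ℝ) (Or.inr h1)).sub
    (memLp_indicator_const 2 (measurableSet_dyad _) (1:ℝ) (Or.inr h2))).const_mul _)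

lemma integral_haar_self (p : ℤ × ℤ) : ∫ x, haarF p x * haarF p x = 1 := by
  calc ∫ x, haarF p x * haarF p x
      = ∫ x, (dLen p)⁻¹ * (dyad p).indicator (fun _ => (1:ℝ)) x := by
        simp only [haar_sq]
    _ = (dLen p)⁻¹ * dLen p := by rw [integral_const_mul _ _, integral_indicator_dyad]
    _ = 1 := inv_mul_cancel₀ (dLen_pos p).ne'

lemma integral_haar_mul_of_lt {p q : ℤ × ℤ} (hsub : dyad p ⊆ dyad q) (hlt : p.1 < q.1) :
    ∫ x, haarF p x * haarF q x = 0 := by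
  obtain ⟨x₀, hx₀⟩ := dyad_nonempty p
  have hx0q : x₀ ∈ dyad q := hsub hx₀
  rw [← halves_union q] at hx0q
  have hlevL : p.1 ≤ (dLeft q).1 := by simp only [dLeft]; omega
  have hlevR : p.1 ≤ (dRight q).1 := by simp only [dRight]; omega
  rcases hx0q with hL | hR
  · have hsubL : dyad p ⊆ dyad (dLeft q) := dyad_subset_of_level_le hlevL ⟨x₀, hx₀, hL⟩
    have key : ∀ x, haarF p x * haarF q x = (Real.sqrt (dLen q))⁻¹ * haarF p x := by
      intro x
      by_cases hx : x ∈ dyad p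
      · rw [haar_on_left (hsubL hx)]; ring
      · rw [haar_eq_zero_of_not_mem hx, zero_mul, mul_zero]
    simp only [key]
    rw [integral_const_mul _ _, integral_haar, mul_zero]
  · have hsubR : dyad p ⊆ dyad (dRight q) := dyad_subset_of_level_le hlevR ⟨x₀, hx₀, hR⟩
    have key : ∀ x, haarF p x * haarF q x = -(Real.sqrt (dLen q))⁻¹ * haarF p x := by
      intro x
      by_cases hx : x ∈ dyad p
      · rw [haar_on_right (hsubR hx)]; ring
      · rw [haar_eq_zero_of_not_mem hx, zero_mul, mul_zero]
    simp only [key]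
    rw [integral_const_mul _ _, integral_haar, mul_zero]

lemma integral_haar_mul {p q : ℤ × ℤ} (h : p ≠ q) : ∫ x, haarF p x * haarF q x = 0 := by
  by_cases hint : (dyad p ∩ dyad q).Nonempty
  · rcases lt_trichotomy p.1 q.1 with hlt | heq | hgt
    · exact integral_haar_mul_of_lt (dyad_subset_of_level_le hlt.le hint) hlt
    · exfalso
      obtain ⟨x, hx1, hx2⟩ := hint
      exact h (eq_of_dyad_eq (Set.Subset.antisymm
        (dyad_subset_of_level_le heq.le ⟨x, hx1, hx2⟩)
        (dyad_subset_of_level_le heq.ge ⟨x, hx2, hx1⟩)))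
    · obtain ⟨x, hx1, hx2⟩ := hint
      have := integral_haar_mul_of_lt (dyad_subset_of_level_le hgt.le ⟨x, hx2, hx1⟩) hgt
      calc ∫ x, haarF p x * haarF q x = ∫ x, haarF q x * haarF p x := by
            simp only [mul_comm]
        _ = 0 := this
  · have key : ∀ x, haarF p x * haarF q x = 0 := by
      intro x
      by_cases hx : x ∈ dyad p
      · have hq : x ∉ dyad q := fun hq => hint ⟨x, hx, hq⟩
        rw [haar_eq_zero_of_not_mem hq, mul_zero]
      · rw [haar_eq_zero_of_not_mem hx, zero_mul]
    simp only [key, integral_zero]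

def haarLp (p : ℤ × ℤ) : Lp ℝ 2 (volume : Measure ℝ) := (memLp_haar p).toLp (haarF p)

lemma inner_haarLp_toLp (q : ℤ × ℤ) (f : ℝ → ℝ) (hf : MemLp f 2 volume) :
    ⟪haarLp q, hf.toLp f⟫_ℝ = ∫ x, f x * haarF q x := by
  rw [MeasureTheory.L2.inner_def]
  apply integral_congr_ae
  filter_upwards [(memLp_haar q).coeFn_toLp, hf.coeFn_toLp] with x hx hy
  simp [haarLp, hx, hy, RCLike.inner_apply, mul_comm]

lemma orthonormal_haar : Orthonormal ℝ haarLp := by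
  rw [orthonormal_iff_ite]
  intro i j
  have hcoe : ⟪haarLp i, haarLp j⟫_ℝ = ∫ x, haarF j x * haarF i x :=
    inner_haarLp_toLp i (haarF j) (memLp_haar j)
  by_cases h : i = j
  · subst h
    rw [hcoe, integral_haar_self, if_pos rfl]
  · rw [hcoe, integral_haar_mul (Ne.symm h), if_neg h]

lemma norm_toLp_sq (f : ℝ → ℝ) (hf : MemLp f 2 volume) :
    ‖hf.toLp f‖ ^ 2 = ∫ x, f x * f x := by
  rw [← real_inner_self_eq_norm_sq, MeasureTheory.L2.inner_def]
  apply integral_congr_ae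
  filter_upwards [hf.coeFn_toLp] with x hx
  simp [hx, RCLike.inner_apply, sq]

lemma bessel (f : ℝ → ℝ) (hf : MemLp f 2 volume) (G : Finset (ℤ × ℤ)) :
    ∑ q ∈ G, (∫ x, f x * haarF q x) ^ 2 ≤ ∫ x, f x * f x := by
  have h := orthonormal_haar.sum_inner_products_le (s := G) (hf.toLp f)
  rw [norm_toLp_sq f hf] at h
  refine le_trans (le_of_eq ?_) h
  apply Finset.sum_congr rfl
  intro q hq
  rw [inner_haarLp_toLp q f hf, Real.norm_eq_abs, sq_abs]

end Haar
/-- `Σ_{K⊆J} |⟨w^{1/2},h_{K₋}⟩ ⟨w^{-1/2},h_K⟩| ≤ [w]_{A₂}^{1/2} |J|`. -/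
theorem statement8 (w : ℝ → ℝ) (hw : ∀ x, 0 < w x)
    (hwloc : LocallyIntegrable w volume)
    (hwinv : LocallyIntegrable (fun x => (w x)⁻¹) volume)
    (A : ℝ) (hA0 : 0 ≤ A)
    (hA : ∀ p : ℤ × ℤ, avg w p * avg (fun x => (w x)⁻¹) p ≤ A)
    (p : ℤ × ℤ) (F : Finset (ℤ × ℤ)) (hF : ∀ q ∈ F, dyad q ⊆ dyad p) :
    ∑ q ∈ F, |hc (fun x => Real.sqrt (w x)) (dLeft q) *
        hc (fun x => (Real.sqrt (w x))⁻¹) q| ≤ Real.sqrt A * dLen p := by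
  set J := dyad p with hJ
  set u : ℝ → ℝ := fun x => Real.sqrt (w x) with hu
  set v : ℝ → ℝ := fun x => (Real.sqrt (w x))⁻¹ with hv
  have hwm : AEStronglyMeasurable w volume := hwloc.aestronglyMeasurable
  have hum : AEStronglyMeasurable u volume :=
    Real.continuous_sqrt.comp_aestronglyMeasurable hwm
  have hvm : AEStronglyMeasurable v volume :=
    (hum.aemeasurable.inv).aestronglyMeasurable
  -- integrability of w and w⁻¹ on J
  have hWint : IntegrableOn w J volume :=
    (hwloc.integrableOn_isCompact isCompact_Icc).mono_set Set.Ico_subset_Icc_self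
  have hWinvint : IntegrableOn (fun x => (w x)⁻¹) J volume :=
    (hwinv.integrableOn_isCompact isCompact_Icc).mono_set Set.Ico_subset_Icc_self
  -- MemLp of indicator√w
  have hg1sq : ∀ x, (J.indicator u x) ^ 2 = J.indicator w x := by
    intro x
    by_cases hx : x ∈ J <;>
      simp [Set.indicator_of_mem, Set.indicator_of_notMem, hx, hu,
        Real.sq_sqrt (hw x).le]
  have hg2sq : ∀ x, (J.indicator v x) ^ 2 = J.indicator (fun x => (w x)⁻¹) x := by
    intro x
    by_cases hx : x ∈ J <;>
      simp [Set.indicator_of_mem, Set.indicator_of_notMem, hx, hv, inv_pow,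
        Real.sq_sqrt (hw x).le]
  have hg1 : MemLp (J.indicator u) 2 volume := by
    rw [memLp_two_iff_integrable_sq (hum.indicator (measurableSet_dyad p))]
    rw [show (fun x => J.indicator u x ^ 2) = J.indicator w from funext hg1sq]
    exact (integrable_indicator_iff (measurableSet_dyad p)).2 hWint
  have hg2 : MemLp (J.indicator v) 2 volume := by
    rw [memLp_two_iff_integrable_sq (hvm.indicator (measurableSet_dyad p))]
    rw [show (fun x => J.indicator v x ^ 2) = J.indicator (fun x => (w x)⁻¹) from
      funext hg2sq]
    exact (integrable_indicator_iff (measurableSet_dyad p)).2 hWinvint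
  -- Haar coefficients localize
  have hcind : ∀ (f : ℝ → ℝ) (q' : ℤ × ℤ), dyad q' ⊆ J →
      hc f q' = ∫ x, J.indicator f x * haarF q' x := by
    intro f q' hsub
    unfold hc
    congr 1
    funext x
    by_cases hx : x ∈ J
    · rw [Set.indicator_of_mem hx]
    · rw [haar_eq_zero_of_not_mem (fun hm => hx (hsub hm)), mul_zero, mul_zero]
  -- norms
  have hr1 : ∫ x, J.indicator u x * J.indicator u x = ∫ x in J, w x := by
    rw [← MeasureTheory.integral_indicator (measurableSet_dyad p)]
    congr 1
    funext x
    have := hg1sq x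
    rw [sq] at this
    exact this
  have hr2 : ∫ x, J.indicator v x * J.indicator v x = ∫ x in J, (w x)⁻¹ := by
    rw [← MeasureTheory.integral_indicator (measurableSet_dyad p)]
    congr 1
    funext x
    have := hg2sq x
    rw [sq] at this
    exact this
  -- Bessel
  have hB1 : ∑ q' ∈ F.image dLeft, (hc u q') ^ 2 ≤ ∫ x in J, w x := by
    have hb := bessel (J.indicator u) hg1 (F.image dLeft)
    rw [hr1] at hb
    refine le_trans (le_of_eq (Finset.sum_congr rfl ?_)) hb
    intro q' hq'
    obtain ⟨q, hqF, rfl⟩ := Finset.mem_image.mp hq'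
    rw [hcind u _ ((dLeft_subset q).trans (hF q hqF))]
  have hB2 : ∑ q ∈ F, (hc v q) ^ 2 ≤ ∫ x in J, (w x)⁻¹ := by
    have hb := bessel (J.indicator v) hg2 F
    rw [hr2] at hb
    refine le_trans (le_of_eq (Finset.sum_congr rfl ?_)) hb
    intro q hq
    rw [hcind v q (hF q hq)]
  have hSa : ∑ q ∈ F, (hc u (dLeft q)) ^ 2 = ∑ q' ∈ F.image dLeft, (hc u q') ^ 2 := by
    rw [Finset.sum_image]
    intro x _ y _ h
    simp only [dLeft, Prod.mk.injEq] at h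
    exact Prod.ext (by omega) (by omega)
  -- abbreviations
  set a : ℤ × ℤ → ℝ := fun q => hc u (dLeft q) with ha
  set b : ℤ × ℤ → ℝ := fun q => hc v q with hb
  set Sa := ∑ q ∈ F, a q ^ 2 with hSadef
  set Sb := ∑ q ∈ F, b q ^ 2 with hSbdef
  set W1 := ∫ x in J, w x with hW1
  set W2 := ∫ x in J, (w x)⁻¹ with hW2
  have hSa0 : 0 ≤ Sa := Finset.sum_nonneg fun q _ => sq_nonneg _
  have hSb0 : 0 ≤ Sb := Finset.sum_nonneg fun q _ => sq_nonneg _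
  have hW10 : 0 ≤ W1 :=
    MeasureTheory.setIntegral_nonneg (measurableSet_dyad p) fun x _ => (hw x).le
  have hW20 : 0 ≤ W2 :=
    MeasureTheory.setIntegral_nonneg (measurableSet_dyad p) fun x _ =>
      (inv_pos.mpr (hw x)).le
  have hSaW : Sa ≤ W1 := by rw [hSa]; exact hB1
  have hSbW : Sb ≤ W2 := hB2
  have hCS : (∑ q ∈ F, |a q| * |b q|) ^ 2 ≤ Sa * Sb := by
    have h := Finset.sum_mul_sq_le_sq_mul_sq F (fun q => |a q|) (fun q => |b q|)
    simpa [sq_abs] using h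
  have ht : 0 < dLen p := dLen_pos p
  have hprod : W1 * W2 ≤ A * (dLen p * dLen p) := by
    have hAp := hA p
    simp only [avg] at hAp
    have hne : dLen p ≠ 0 := ht.ne'
    have heq : W1 * W2 = (dLen p * dLen p) *
        (((dLen p)⁻¹ * W1) * ((dLen p)⁻¹ * W2)) := by
      field_simp
    rw [heq]
    calc (dLen p * dLen p) * (((dLen p)⁻¹ * W1) * ((dLen p)⁻¹ * W2))
        ≤ (dLen p * dLen p) * A := by
          apply mul_le_mul_of_nonneg_left _ (by positivity)
          exact hAp
      _ = A * (dLen p * dLen p) := by ring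
  calc ∑ q ∈ F, |a q * b q| = ∑ q ∈ F, |a q| * |b q| := by
        simp only [abs_mul]
    _ = Real.sqrt ((∑ q ∈ F, |a q| * |b q|) ^ 2) := by
        rw [Real.sqrt_sq (Finset.sum_nonneg fun q _ =>
          mul_nonneg (abs_nonneg _) (abs_nonneg _))]
    _ ≤ Real.sqrt (Sa * Sb) := Real.sqrt_le_sqrt hCS
    _ ≤ Real.sqrt (W1 * W2) := Real.sqrt_le_sqrt (mul_le_mul hSaW hSbW hSb0 hW10)
    _ ≤ Real.sqrt (A * (dLen p * dLen p)) := Real.sqrt_le_sqrt hprod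
    _ = Real.sqrt A * dLen p := by
        rw [Real.sqrt_mul hA0, Real.sqrt_mul_self ht.le]
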